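/- Let K be a field and let (p₁,φ₁), (p₂,φ₂), (p₃,φ₃) be a triple of flags of P(K³) (so pᵢ ∈ K³ nonzero, φᵢ nonzero linear forms, φᵢ(pᵢ) = 0). Then the following two conditions are equivalent (indices mod 3): (A) either φ_{i+1}(pᵢ) ≠ 0 for all i, or φ_{i−1}(pᵢ) ≠ 0 for all i; (B) the vectors p₁,p₂,p₃ are pairwise non-proportional, the forms φ₁,φ₂,φ₃ are pairwise non-proportional, for every choice of distinct indices i,j,k it is not the case that both φᵢ(p_k) = 0 and φⱼ(p_k) = 0 (no point lies on all three lines), and it is not the case that both φ_k(pᵢ) = 0 and φ_k(pⱼ) = 0 (no line contains all three points). -/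

import Mathlib

lemma forms_proportional {K : Type*} [Field K] {u v : Fin 3 → K}
    (hv : v ≠ 0) (hind : ∀ c : K, u ≠ c • v)
    {φ ψ : (Fin 3 → K) →ₗ[K] K} (hψ : ψ ≠ 0)
    (hφu : φ u = 0) (hφv : φ v = 0) (hψu : ψ u = 0) (hψv : ψ v = 0) :
    ∃ c : K, φ = c • ψ := by
  have li : LinearIndependent K ![u, v] := by
    rw [linearIndependent_fin2]
    refine ⟨hv, fun a h => hind a h.symm⟩
  set W : Submodule K (Fin 3 → K) := Submodule.span K {u, v} with hW
  have hrange : Set.range ![u, v] = {u, v} := by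
    simp [Set.range_comp]
    ext x; simp [Fin.exists_fin_two]; tauto
  have hfr : Module.finrank K W = 2 := by
    rw [hW, ← hrange, finrank_span_eq_card li]
    simp
  have hann : Module.finrank K W.dualAnnihilator = 1 := by
    have e := LinearEquiv.finrank_eq (R := K) (M := (Fin 3 → K) ⧸ W)
      (N := {x // x ∈ W.dualAnnihilator}) (Subspace.quotEquivAnnihilator W)
    have h2 := Submodule.finrank_quotient_add_finrank W
    have h3 : Module.finrank K (Fin 3 → K) = 3 := by simp
    omega
  have hmem : ∀ (f : (Fin 3 → K) →ₗ[K] K), f u = 0 → f v = 0 → f ∈ W.dualAnnihilator := by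
    intro f hfu hfv
    rw [Submodule.mem_dualAnnihilator]
    intro w hw
    have : W ≤ LinearMap.ker f := by
      rw [hW, Submodule.span_le]
      intro x hx
      rcases hx with h | h
      · simp [h, hfu]
      · simp at h; simp [h, hfv]
    exact this hw
  have hφm := hmem φ hφu hφv
  have hψm := hmem ψ hψu hψv
  have hle : Submodule.span K {ψ} ≤ W.dualAnnihilator := by
    rw [Submodule.span_le]; simpa using hψm
  have hfr1 : Module.finrank K (Submodule.span K ({ψ} : Set _)) = 1 := by
    rw [finrank_span_singleton hψ]
  have heq : Submodule.span K {ψ} = W.dualAnnihilator := by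
    apply Submodule.eq_of_le_of_finrank_eq hle
    rw [hfr1, hann]
  rw [← heq, Submodule.mem_span_singleton] at hφm
  obtain ⟨c, hc⟩ := hφm
  exact ⟨c, hc.symm⟩

/-- Characterization of nondegenerate triples of flags of `P(K³)`: for a triple of
flags `(p i, φ i)` (indices mod 3), the condition
“either `φ_{i+1}(p_i) ≠ 0` for all `i`, or `φ_{i−1}(p_i) ≠ 0` for all `i`”
is equivalent to: the points are pairwise distinct, the lines are pairwise
distinct, no point lies on all three lines, and no line contains all three
points. -/
theorem nondegenerate_triple_characterization {K : Type*} [Field K]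
    (p : Fin 3 → (Fin 3 → K)) (φ : Fin 3 → ((Fin 3 → K) →ₗ[K] K))
    (hp : ∀ i, p i ≠ 0) (hφ : ∀ i, φ i ≠ 0) (hflag : ∀ i, φ i (p i) = 0) :
    ((∀ i, φ (i + 1) (p i) ≠ 0) ∨ (∀ i, φ (i + 2) (p i) ≠ 0)) ↔
      ((∀ i j, i ≠ j → ∀ c : K, p i ≠ c • p j) ∧
       (∀ i j, i ≠ j → ∀ c : K, φ i ≠ c • φ j) ∧
       (∀ i j k : Fin 3, i ≠ j → j ≠ k → i ≠ k →
         ¬(φ i (p k) = 0 ∧ φ j (p k) = 0)) ∧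
       (∀ i j k : Fin 3, i ≠ j → j ≠ k → i ≠ k →
         ¬(φ k (p i) = 0 ∧ φ k (p j) = 0))) := by
  have keyP : ∀ i j : Fin 3, ∀ c : K, p i = c • p j → φ j (p i) = 0 ∧ φ i (p j) = 0 := by
    intro i j c hc
    have hc0 : c ≠ 0 := by rintro rfl; rw [zero_smul] at hc; exact hp i hc
    constructor
    · rw [hc, map_smul, hflag j, smul_zero]
    · have h := hflag i
      rw [hc, map_smul, smul_eq_mul, mul_eq_zero] at h
      tauto
  have keyF : ∀ i j : Fin 3, ∀ c : K, φ i = c • φ j → φ i (p j) = 0 ∧ φ j (p i) = 0 := by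
    intro i j c hc
    constructor
    · rw [hc]; simp [hflag j]
    · have h := hflag i
      rw [hc] at h
      simp only [LinearMap.smul_apply, smul_eq_mul, mul_eq_zero] at h
      rcases h with h | h
      · exfalso; apply hφ i; rw [hc, h, zero_smul]
      · exact h
  have e1 : ∀ m : Fin 3, m + 2 + 1 = m := by decide
  have e2 : ∀ m : Fin 3, m + 1 + 2 = m := by decide
  have two_cases : ∀ i j : Fin 3, i ≠ j → j = i + 1 ∨ j = i + 2 := by decide
  have mem1 : ∀ i j k : Fin 3, i ≠ j → j ≠ k → i ≠ k → i = k + 1 ∨ j = k + 1 := by decide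
  have mem2 : ∀ i j k : Fin 3, i ≠ j → j ≠ k → i ≠ k → i = k + 2 ∨ j = k + 2 := by decide
  constructor
  · rintro (h | h)
    · refine ⟨?_, ?_, ?_, ?_⟩
      · intro i j hij c hc
        obtain ⟨h1, h2⟩ := keyP i j c hc
        rcases two_cases i j hij with rfl | rfl
        · exact h i h1
        · exact h (i + 2) (by rw [e1]; exact h2)
      · intro i j hij c hc
        obtain ⟨h1, h2⟩ := keyF i j c hc
        rcases two_cases i j hij with rfl | rfl
        · exact h i h2
        · exact h (i + 2) (by rw [e1]; exact h1)
      · rintro i j k hij hjk hik ⟨h1, h2⟩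
        rcases mem1 i j k hij hjk hik with rfl | rfl
        · exact h k h1
        · exact h k h2
      · rintro i j k hij hjk hik ⟨h1, h2⟩
        rcases mem2 i j k hij hjk hik with rfl | rfl
        · exact h (k + 2) (by rw [e1]; exact h1)
        · exact h (k + 2) (by rw [e1]; exact h2)
    · refine ⟨?_, ?_, ?_, ?_⟩
      · intro i j hij c hc
        obtain ⟨h1, h2⟩ := keyP i j c hc
        rcases two_cases i j hij with rfl | rfl
        · exact h (i + 1) (by rw [e2]; exact h2)
        · exact h i h1
      · intro i j hij c hc
        obtain ⟨h1, h2⟩ := keyF i j c hc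
        rcases two_cases i j hij with rfl | rfl
        · exact h (i + 1) (by rw [e2]; exact h1)
        · exact h i h2
      · rintro i j k hij hjk hik ⟨h1, h2⟩
        rcases mem2 i j k hij hjk hik with rfl | rfl
        · exact h k h1
        · exact h k h2
      · rintro i j k hij hjk hik ⟨h1, h2⟩
        rcases mem1 i j k hij hjk hik with rfl | rfl
        · exact h (k + 1) (by rw [e2]; exact h1)
        · exact h (k + 1) (by rw [e2]; exact h2)
  · rintro ⟨hpts, hforms, hl3, hp3⟩
    by_contra hcon
    push_neg at hcon
    obtain ⟨⟨i, hi⟩, ⟨j, hj⟩⟩ := hcon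
    have three_cases : ∀ a b : Fin 3, b = a ∨ b = a + 1 ∨ b = a + 2 := by decide
    have d12 : ∀ m : Fin 3, m + 1 ≠ m + 2 := by decide
    have d20 : ∀ m : Fin 3, m + 2 ≠ m := by decide
    have d10 : ∀ m : Fin 3, m + 1 ≠ m := by decide
    have d01 : ∀ m : Fin 3, m ≠ m + 1 := by decide
    have d02 : ∀ m : Fin 3, m ≠ m + 2 := by decide
    have d21 : ∀ m : Fin 3, m + 2 ≠ m + 1 := by decide
    rcases three_cases i j with rfl | rfl | rfl
    · exact hl3 (j + 1) (j + 2) j (d12 j) (d20 j) (d10 j) ⟨hi, hj⟩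
    · rw [e2] at hj
      obtain ⟨c, hc⟩ := forms_proportional (hp (i + 1))
        (hpts i (i + 1) (d01 i)) (hφ (i + 1))
        (hflag i) hj hi (hflag (i + 1))
      exact hforms i (i + 1) (d01 i) c hc
    · have e3 : ∀ m : Fin 3, m + 2 + 2 = m + 1 := by decide
      rw [e3] at hj
      exact hp3 i (i + 2) (i + 1) (d02 i) (d21 i) (d01 i) ⟨hi, hj⟩
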